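/- In the Bin-Packing game determined by integers n ≥ 1, k ≥ 1, B ≥ 1 and item values v(1),…,v(n), for every connected Nash stable partition π: no item vertex u_j forms a singleton part; every part containing an item vertex also contains some bin vertex b_i; and every part P of π satisfies Σ_{j : u_j ∈ P} v(j) ≤ B. -/

import Mathlib

/-- A partition of the finite vertex set `V`, represented by the function sending each
vertex to its part. -/
structure ASHGPart (V : Type*) [DecidableEq V] where
  part : V → Finset V
  mem_part : ∀ v, v ∈ part v
  eq_of_mem : ∀ u v, u ∈ part v → part u = part v

/-- The utility of vertex `v` in coalition `S`: the sum of `w v u` over `u ∈ S`, `u ≠ v`. -/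
def util {V : Type*} [DecidableEq V] (w : V → V → ℤ) (v : V) (S : Finset V) : ℤ :=
  ∑ u ∈ S.erase v, w v u

/-- A partition is Nash stable if every vertex has nonnegative utility in its own part and
does not prefer any other part of the partition. -/
def NashStable {V : Type*} [DecidableEq V] (w : V → V → ℤ) (π : ASHGPart V) : Prop :=
  ∀ v : V, 0 ≤ util w v (π.part v) ∧ ∀ x : V, util w v (π.part x) ≤ util w v (π.part v)


/-- The underlying (undirected simple) graph of the game: distinct `u, v` are adjacent
iff `w u v ≠ 0` or `w v u ≠ 0`. -/
def underlying {V : Type*} (w : V → V → ℤ) : SimpleGraph V where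
  Adj u v := u ≠ v ∧ (w u v ≠ 0 ∨ w v u ≠ 0)
  symm := ⟨fun u v h => ⟨h.1.symm, h.2.symm⟩⟩
  loopless := ⟨fun v h => h.1 rfl⟩

/-- A Nash stable partition is connected if every part induces a connected subgraph of
the underlying graph. -/
def ConnNashStable {V : Type*} [DecidableEq V] (w : V → V → ℤ) (π : ASHGPart V) : Prop :=
  NashStable w π ∧ ∀ x : V, ((underlying w).induce (↑(π.part x) : Set V)).Connected

/-- The vertex set of the Bin-Packing game: `n` item vertices, `k` bin vertices,
and `k` helper vertices. -/
inductive BPV (n k : ℕ) where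
  | item : Fin n → BPV n k
  | bin : Fin k → BPV n k
  | helper : Fin k → BPV n k
  deriving DecidableEq, Fintype

/-- The weights of the Bin-Packing game. -/
def bpw (n k : ℕ) (B : ℤ) (v : Fin n → ℤ) : BPV n k → BPV n k → ℤ
  | .bin i, .helper i' => if i = i' then B else 0
  | .item _, .bin _ => 1
  | .bin _, .item j => -(v j)
  | _, _ => 0

section Aux

variable {n k : ℕ} {B : ℤ} {v : Fin n → ℤ}

lemma bpw_item_nonneg (j : Fin n) (u : BPV n k) : 0 ≤ bpw n k B v (BPV.item j) u := by
  cases u <;> simp [bpw]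

lemma util_item_ge_one (j : Fin n) (i : Fin k) (S : Finset (BPV n k))
    (h : BPV.bin i ∈ S) : 1 ≤ util (bpw n k B v) (BPV.item j) S := by
  have hmem : BPV.bin i ∈ S.erase (BPV.item j) :=
    Finset.mem_erase.mpr ⟨by simp, h⟩
  calc (1 : ℤ) = bpw n k B v (BPV.item j) (BPV.bin i) := by simp [bpw]
    _ ≤ _ := Finset.single_le_sum (fun u _ => bpw_item_nonneg j u) hmem

lemma util_bin_eq (i : Fin k) (P : Finset (BPV n k)) :
    util (bpw n k B v) (BPV.bin i) P =
      (if BPV.helper i ∈ P then B else 0)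
        - ∑ j ∈ Finset.univ.filter (fun j => BPV.item j ∈ P), v j := by
  have hzero : bpw n k B v (BPV.bin i) (BPV.bin i) = 0 := rfl
  have key : ∀ u : BPV n k, bpw n k B v (BPV.bin i) u =
      (if u = BPV.helper i then B else 0)
        + ∑ j : Fin n, (if u = BPV.item j then -(v j) else 0) := by
    intro u
    cases u with
    | item j => simp [bpw, Finset.sum_ite_eq]
    | bin i' => simp [bpw]
    | helper i' => simp [bpw, eq_comm]
  rw [util, Finset.sum_erase _ hzero]
  simp_rw [key, Finset.sum_add_distrib, Finset.sum_ite_eq' P (BPV.helper i) (fun _ => B)]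
  rw [Finset.sum_comm]
  simp_rw [Finset.sum_ite_eq' P]
  rw [← Finset.sum_filter]
  push_cast
  rw [Finset.sum_neg_distrib]
  ring

end Aux



theorem stmt_9 (n k : ℕ) (B : ℤ) (hn : 1 ≤ n) (hk : 1 ≤ k) (hB : 1 ≤ B)
    (v : Fin n → ℤ) (hv : ∀ j, 1 ≤ v j) (hsum : ∑ j, v j = (k : ℤ) * B)
    (π : ASHGPart (BPV n k)) (hπ : ConnNashStable (bpw n k B v) π) :
    (∀ j : Fin n, π.part (BPV.item j) ≠ {BPV.item j}) ∧
    (∀ j : Fin n, ∃ i : Fin k, BPV.bin i ∈ π.part (BPV.item j)) ∧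
    (∀ x : BPV n k,
      ∑ j ∈ Finset.univ.filter (fun j => BPV.item j ∈ π.part x), v j ≤ B) := by
  obtain ⟨hNash, hConn⟩ := hπ
  have claim1 : ∀ j : Fin n, π.part (BPV.item j) ≠ {BPV.item j} := by
    intro j hsing
    have i0 : Fin k := ⟨0, hk⟩
    have hbin : BPV.bin i0 ∈ π.part (BPV.bin i0) := π.mem_part _
    have h1 : (1 : ℤ) ≤ util (bpw n k B v) (BPV.item j) (π.part (BPV.bin i0)) :=
      util_item_ge_one j i0 _ hbin
    have h2 := (hNash (BPV.item j)).2 (BPV.bin i0)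
    rw [hsing] at h2
    have h3 : util (bpw n k B v) (BPV.item j) ({BPV.item j} : Finset (BPV n k)) = 0 := by
      simp [util]
    omega
  have claim2 : ∀ j : Fin n, ∃ i : Fin k, BPV.bin i ∈ π.part (BPV.item j) := by
    intro j
    set P := π.part (BPV.item j) with hP
    have hjP : BPV.item j ∈ P := π.mem_part _
    obtain ⟨y, hy, hne⟩ : ∃ y ∈ P, y ≠ BPV.item j := by
      by_contra h
      push_neg at h
      exact claim1 j (Finset.eq_singleton_iff_unique_mem.mpr ⟨hjP, h⟩)
    have hconn := hConn (BPV.item j)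
    have hreach := hconn.preconnected ⟨BPV.item j, by simpa using hjP⟩ ⟨y, by simpa using hy⟩
    obtain ⟨p⟩ := hreach
    have hnil : ¬ p.Nil := SimpleGraph.Walk.not_nil_of_ne (by simp [Subtype.ext_iff]; exact fun h => hne h.symm)
    have hadj := p.adj_snd hnil
    set u := p.getVert 1 with hu
    have hadj' : (underlying (bpw n k B v)).Adj (BPV.item j) ↑u := hadj
    obtain ⟨hneq, hw⟩ := hadj'
    have humem : (u : BPV n k) ∈ P := by
      have := u.2; simpa using this
    rcases hval : (u : BPV n k) with j' | i | i'
    · rw [hval] at hw; simp [bpw] at hw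
    · exact ⟨i, by rwa [hval] at humem⟩
    · rw [hval] at hw; simp [bpw] at hw
  refine ⟨claim1, claim2, ?_⟩
  intro x
  by_cases hitem : ∃ j : Fin n, BPV.item j ∈ π.part x
  · obtain ⟨j, hj⟩ := hitem
    have hPj : π.part (BPV.item j) = π.part x := π.eq_of_mem _ _ hj
    obtain ⟨i, hi⟩ := claim2 j
    rw [hPj] at hi
    have hPi : π.part (BPV.bin i) = π.part x := π.eq_of_mem _ _ hi
    have h0 := (hNash (BPV.bin i)).1
    rw [hPi, util_bin_eq] at h0
    have hpos : (1:ℤ) ≤ ∑ j' ∈ Finset.univ.filter (fun j' => BPV.item j' ∈ π.part x), v j' := by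
      calc (1:ℤ) ≤ v j := hv j
        _ ≤ _ := Finset.single_le_sum (fun j' _ => le_trans zero_le_one (hv j'))
            (Finset.mem_filter.mpr ⟨Finset.mem_univ _, hj⟩)
    split at h0
    · omega
    · omega
  · push_neg at hitem
    have : Finset.univ.filter (fun j => BPV.item j ∈ π.part x) = ∅ := by
      apply Finset.filter_eq_empty_iff.mpr
      intro j _; exact hitem j
    rw [this, Finset.sum_empty]
    omega
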